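/- arXiv:1311.2648 — 5 statements merged into one kernel-verified Lean document; each statement's English description precedes it below -/
import Mathlib

section
/- Let G be an abelian group, X an infinite subset of G, and κ a regular infinite cardinal with κ ≤ card(X). Then the co-κ filter on X is self-indulgent as a family of subsets of G. -/
open Pointwise

universe u

/-- `S* = S ∪ {0} ∪ (-S)`. -/
def Sstar {G : Type u} [AddCommGroup G] (S : Set G) : Set G := S ∪ {0} ∪ (-S)

/-- `F'` is a downward cofinal subset of `F` (ordered by inclusion). -/
def DownCofinal {G : Type u} [AddCommGroup G] (F' F : Set (Set G)) : Prop :=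
  F' ⊆ F ∧ ∀ S ∈ F, ∃ T ∈ F', T ⊆ S

/-- The family `(x T)_{T ∈ F''}`, indexed by `F''` ordered (downward) by inclusion,
converges strongly to `a` with respect to `F`: for every `S ∈ F` there is an index
`T ∈ F''` such that `x T' - a ∈ S*` for every index `T' ∈ F''` with `T' ⊆ T`. -/
def ConvStrong {G : Type u} [AddCommGroup G] (F F'' : Set (Set G)) (x : Set G → G)
    (a : G) : Prop :=
  ∀ S ∈ F, ∃ T ∈ F'', ∀ T' ∈ F'', T' ⊆ T → x T' - a ∈ Sstar S

/-- `F` is self-indulgent: for every `S ∈ F` and every family `(x T)_{T ∈ F'}` of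
elements of `S*` indexed by a downward cofinal subset `F' ⊆ F`, there exist `a ∈ S*`
and a downward cofinal subset `F'' ⊆ F'` such that `(x T)_{T ∈ F''}` converges
strongly to `a` with respect to `F`. -/
def SelfIndulgent {G : Type u} [AddCommGroup G] (F : Set (Set G)) : Prop :=
  ∀ S ∈ F, ∀ F' : Set (Set G), DownCofinal F' F →
    ∀ x : Set G → G, (∀ T ∈ F', x T ∈ Sstar S) →
      ∃ a ∈ Sstar S, ∃ F'' : Set (Set G), DownCofinal F'' F' ∧ ConvStrong F F'' x a

theorem stmt1 {G : Type u} [AddCommGroup G] (X : Set G) (hX : X.Infinite)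
    (κ : Cardinal.{u}) (hreg : κ.IsRegular) (hκ : κ ≤ Cardinal.mk X) :
    SelfIndulgent {S : Set G | S ⊆ X ∧ Cardinal.mk ↥(X \ S) < κ} := by
  intro S hS F' hF' x hx
  have hzero : ∀ U : Set G, (0 : G) ∈ Sstar U := by
    intro U; exact Or.inl (Or.inr rfl)
  have hXF : X ∈ {S : Set G | S ⊆ X ∧ Cardinal.mk ↥(X \ S) < κ} := by
    refine ⟨subset_rfl, ?_⟩
    simp only [Set.diff_self, Cardinal.mk_emptyCollection]
    exact lt_of_lt_of_le Cardinal.aleph0_pos hreg.aleph0_le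
  by_cases hcase : ∃ a : G, ∀ S' ∈ F', ∃ T ∈ F', T ⊆ S' ∧ x T = a
  · -- some value is attained cofinally
    obtain ⟨a, ha⟩ := hcase
    obtain ⟨S0, hS0, -⟩ := hF'.2 X hXF
    obtain ⟨T0, hT0, -, hxT0⟩ := ha S0 hS0
    refine ⟨a, hxT0 ▸ hx T0 hT0, {T ∈ F' | x T = a}, ⟨⟨fun T hT => hT.1, ?_⟩, ?_⟩⟩
    · intro S' hS'
      obtain ⟨T, hT, hTsub, hxT⟩ := ha S' hS'
      exact ⟨T, ⟨hT, hxT⟩, hTsub⟩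
    · intro U hU
      refine ⟨T0, ⟨hT0, hxT0⟩, fun T' hT' _ => ?_⟩
      rw [hT'.2, sub_self]
      exact hzero U
  · -- no value attained cofinally; converge to 0
    push_neg at hcase
    choose w hw1 hw2 using hcase
    refine ⟨0, hzero S, F', ⟨subset_rfl, fun S' hS' => ⟨S', hS', subset_rfl⟩⟩, ?_⟩
    intro U hU
    set B : Set G := Sstar S \ Sstar U with hBdef
    have hBsub : B ⊆ (X \ U) ∪ (-(X \ U)) := by
      rintro b ⟨hbS, hbU⟩
      rcases hbS with (hb | hb) | hb
      · exact Or.inl ⟨hS.1 hb, fun hbU' => hbU (Or.inl (Or.inl hbU'))⟩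
      · exact absurd (hb ▸ hzero U) hbU
      · exact Or.inr ⟨hS.1 hb, fun hbU' => hbU (Or.inr hbU')⟩
    have hneg : Cardinal.mk ↥(-(X \ U) : Set G) = Cardinal.mk ↥(X \ U) := by
      rw [← Set.image_neg_eq_neg]
      exact Cardinal.mk_image_eq neg_injective
    have hB : Cardinal.mk ↥B < κ := by
      calc Cardinal.mk ↥B ≤ Cardinal.mk ↥((X \ U) ∪ (-(X \ U))) := Cardinal.mk_le_mk_of_subset hBsub
        _ ≤ Cardinal.mk ↥(X \ U) + Cardinal.mk ↥(-(X \ U) : Set G) := Cardinal.mk_union_le _ _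
        _ = Cardinal.mk ↥(X \ U) + Cardinal.mk ↥(X \ U) := by rw [hneg]
        _ < κ := Cardinal.add_lt_of_lt hreg.aleph0_le hU.2 hU.2
    set V : Set G := U ∩ ⋂ b ∈ B, w b with hVdef
    have hVF : V ∈ {S : Set G | S ⊆ X ∧ Cardinal.mk ↥(X \ S) < κ} := by
      refine ⟨(Set.inter_subset_left).trans hU.1, ?_⟩
      have hsub : X \ V ⊆ (X \ U) ∪ ⋃ (b : B), (X \ w b) := by
        intro g hg
        by_cases hgU : g ∈ U
        · refine Or.inr ?_
          have : g ∉ ⋂ b ∈ B, w b := fun h => hg.2 ⟨hgU, h⟩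
          simp only [Set.mem_iInter, not_forall] at this
          obtain ⟨b, hb, hgb⟩ := this
          exact Set.mem_iUnion.2 ⟨⟨b, hb⟩, hg.1, hgb⟩
        · exact Or.inl ⟨hg.1, hgU⟩
      refine lt_of_le_of_lt (Cardinal.mk_le_mk_of_subset hsub) ?_
      refine lt_of_le_of_lt (Cardinal.mk_union_le _ _) ?_
      refine Cardinal.add_lt_of_lt hreg.aleph0_le hU.2 ?_
      refine lt_of_le_of_lt (Cardinal.mk_iUnion_le _) ?_
      refine Cardinal.mul_lt_of_lt hreg.aleph0_le hB ?_
      exact Cardinal.iSup_lt_of_isRegular hreg hB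
        (fun b => (hF'.1 (hw1 b)).2)
    obtain ⟨T, hT, hTV⟩ := hF'.2 V hVF
    refine ⟨T, hT, fun T' hT' hT'T => ?_⟩
    rw [sub_zero]
    by_contra hnot
    have hb : x T' ∈ B := ⟨hx T' hT', hnot⟩
    have : T' ⊆ w (x T') := by
      refine hT'T.trans (hTV.trans ?_)
      intro g hg
      exact (Set.mem_iInter₂.1 hg.2) (x T') hb
    exact hw2 (x T') T' hT' this rfl
end

section
/- Let G be a group, T a (not necessarily Hausdorff) group topology on G, and S a neighborhood of the identity e under T. Then one can choose for each q ∈ ℚ a neighborhood S_q of e under T so that U((S_q)_{q∈ℚ}) ⊆ S. -/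
open Pointwise

/-- `S* = S ∪ {e} ∪ S⁻¹`. -/
def SstarM {G : Type*} [Group G] (S : Set G) : Set G := S ∪ {1} ∪ S⁻¹

/-- `U((S_q)_{q ∈ ℚ})`: the union, over all finite strictly increasing sequences
`q₀ < ⋯ < q_n` in `ℚ`, of the setwise products `S*_{q₀} ⋯ S*_{q_n}`. -/
def UQ {G : Type*} [Group G] (S : ℚ → Set G) : Set G :=
  ⋃ (n : ℕ) (q : Fin (n + 1) → ℚ) (_ : StrictMono q),
    (List.ofFn fun i => SstarM (S (q i))).prod

section Aux

variable {G : Type*} [Group G] [TopologicalSpace G] [IsTopologicalGroup G]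

lemma sym_step (s : Set G) (hs : s ∈ nhds (1 : G)) :
    ∃ V : Set G, (V ∈ nhds (1 : G) ∧ V⁻¹ = V ∧ (1 : G) ∈ V) ∧ V * V * V ⊆ s := by
  obtain ⟨V₁, hV₁, h1⟩ := exists_nhds_one_split hs
  obtain ⟨V₂, hV₂, h2⟩ := exists_nhds_one_split hV₁
  have h1V₂ : (1 : G) ∈ V₂ := mem_of_mem_nhds hV₂
  have hsub : V₂ ⊆ V₁ := by
    intro v hv
    have := h2 v hv 1 h1V₂
    simpa using this
  refine ⟨V₂ ∩ V₂⁻¹, ⟨?_, ?_, ?_⟩, ?_⟩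
  · exact Filter.inter_mem hV₂ (inv_mem_nhds_one G hV₂)
  · simp [Set.inter_comm]
  · exact ⟨h1V₂, by simpa using h1V₂⟩
  · rintro x ⟨y, hy, c, hc, rfl⟩
    rcases hy with ⟨a, ha, b, hb, rfl⟩
    exact h1 (a * b) (h2 a ha.1 b hb.1) c (hsub hc.1)

lemma exists_W (S : Set G) (hS : S ∈ nhds (1 : G)) :
    ∃ W : ℕ → Set G, (∀ n, W n ∈ nhds (1 : G)) ∧ (∀ n, (W n)⁻¹ = W n) ∧
      (∀ n, (1 : G) ∈ W n) ∧ (∀ n, W (n + 1) * W (n + 1) * W (n + 1) ⊆ W n) ∧ W 0 ⊆ S := by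
  have step : ∀ p : {V : Set G // V ∈ nhds (1 : G) ∧ V⁻¹ = V ∧ (1 : G) ∈ V},
      ∃ q : {V : Set G // V ∈ nhds (1 : G) ∧ V⁻¹ = V ∧ (1 : G) ∈ V},
        q.1 * q.1 * q.1 ⊆ p.1 := by
    intro p
    obtain ⟨V, hV, hsub⟩ := sym_step p.1 p.2.1
    exact ⟨⟨V, hV⟩, hsub⟩
  choose next hnext using step
  obtain ⟨V₀, hV₀, hV₀S⟩ := sym_step S hS
  have h1V₀ : (1 : G) ∈ V₀ := hV₀.2.2
  set F : ℕ → {V : Set G // V ∈ nhds (1 : G) ∧ V⁻¹ = V ∧ (1 : G) ∈ V} :=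
    fun n => Nat.rec ⟨V₀, hV₀⟩ (fun _ p => next p) n with hF
  refine ⟨fun n => (F n).1, fun n => (F n).2.1, fun n => (F n).2.2.1,
    fun n => (F n).2.2.2, fun n => ?_, ?_⟩
  · exact hnext (F n)
  · intro x hx
    have : x = x * 1 * 1 := by simp
    rw [this]
    exact hV₀S (Set.mul_mem_mul (Set.mul_mem_mul hx h1V₀) h1V₀)

lemma key (W : ℕ → Set G) (h1 : ∀ n, (1 : G) ∈ W n)
    (h3 : ∀ n, W (n + 1) * W (n + 1) * W (n + 1) ⊆ W n) :
    ∀ k (L : List ℕ), L.length ≤ k → L.Nodup → ∀ m, (∀ n ∈ L, m + 1 ≤ n) →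
      (L.map W).prod ⊆ W m := by
  have hstep : ∀ n, W (n + 1) ⊆ W n := by
    intro n x hx
    have : x = 1 * 1 * x := by simp
    rw [this]
    exact h3 n (Set.mul_mem_mul (Set.mul_mem_mul (h1 _) (h1 _)) hx)
  have hmono : ∀ a b : ℕ, a ≤ b → W b ⊆ W a := by
    intro a b hab
    induction b with
    | zero => simpa [Nat.le_zero.mp hab] using Set.Subset.rfl
    | succ b ih =>
      rcases Nat.lt_or_ge a (b + 1) with h | h
      · exact (ih (Nat.lt_succ_iff.mp h)).trans' (hstep b) |>.trans Set.Subset.rfl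
        |>.trans' Set.Subset.rfl |>.trans Set.Subset.rfl
      · have : a = b + 1 := le_antisymm hab h
        subst this; exact Set.Subset.rfl
  intro k
  induction k with
  | zero =>
    intro L hL _ m _
    have : L = [] := List.length_eq_zero_iff.mp (Nat.le_zero.mp hL)
    subst this
    simpa [Set.one_subset] using h1 m
  | succ k ih =>
    intro L hL hnodup m hm
    rcases L.eq_nil_or_concat with rfl | hne
    · simpa [Set.one_subset] using h1 m
    · have hLne : L ≠ [] := by rcases hne with ⟨a, b, rfl⟩; simp
      have hfin : L.toFinset.Nonempty := by
        simpa [List.toFinset_nonempty_iff] using hLne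
      obtain ⟨m', hm'mem, hm'min⟩ := Finset.exists_min_image L.toFinset id hfin
      rw [List.mem_toFinset] at hm'mem
      have hm'min' : ∀ n ∈ L, m' ≤ n := by
        intro n hn; exact hm'min n (List.mem_toFinset.mpr hn)
      obtain ⟨A, B, rfl⟩ := List.append_of_mem hm'mem
      rw [List.nodup_append] at hnodup
      obtain ⟨hAnd, hBnd', hdisj⟩ := hnodup
      rw [List.nodup_cons] at hBnd'
      obtain ⟨hm'B, hBnd⟩ := hBnd'
      have hm'A : m' ∉ A := fun h => hdisj m' h m' List.mem_cons_self rfl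
      have hlen : A.length + (B.length + 1) ≤ k + 1 := by
        simpa [List.length_append] using hL
      have hA : ∀ n ∈ A, m' + 1 ≤ n := by
        intro n hn
        have h1' : m' ≤ n := hm'min' n (by simp [hn])
        have : n ≠ m' := fun h => hm'A (h ▸ hn)
        omega
      have hB : ∀ n ∈ B, m' + 1 ≤ n := by
        intro n hn
        have h1' : m' ≤ n := hm'min' n (by simp [hn])
        have : n ≠ m' := fun h => hm'B (h ▸ hn)
        omega
      have hAprod : (A.map W).prod ⊆ W m' := ih A (by omega) hAnd m' hA
      have hBprod : (B.map W).prod ⊆ W m' := ih B (by omega) hBnd m' hB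
      have hmm : m + 1 ≤ m' := hm m' hm'mem
      obtain ⟨c, hc⟩ := Nat.exists_eq_add_of_le hmm
      have hsplit : ((A ++ m' :: B).map W).prod
          = (A.map W).prod * ((W m') * (B.map W).prod) := by
        simp [List.map_append, List.prod_append]
      rw [hsplit]
      have hsub : (A.map W).prod * ((W m') * (B.map W).prod) ⊆ W m' * (W m' * W m') :=
        Set.mul_subset_mul hAprod (Set.mul_subset_mul Set.Subset.rfl hBprod)
      refine hsub.trans ?_
      have : W m' * (W m' * W m') = W m' * W m' * W m' := (mul_assoc _ _ _).symm
      rw [this]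
      have hm'eq : m' = (m + c) + 1 := by omega
      rw [hm'eq]
      exact (h3 (m + c)).trans (hmono m (m + c) (by omega))

end Aux

theorem stmt11 {G : Type*} [Group G] (t : TopologicalSpace G)
    (ht : @IsTopologicalGroup G t _) (S : Set G) (hS : S ∈ @nhds G t 1) :
    ∃ Sq : ℚ → Set G, (∀ q : ℚ, Sq q ∈ @nhds G t 1) ∧ UQ Sq ⊆ S := by
  haveI := ht
  obtain ⟨W, hWnhds, hWinv, hW1, hW3, hW0⟩ := exists_W S hS
  refine ⟨fun q => W (Encodable.encode q + 1), fun q => hWnhds _, ?_⟩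
  intro x hx
  simp only [UQ, Set.mem_iUnion] at hx
  obtain ⟨n, q, hq, hxmem⟩ := hx
  have hstar : ∀ r : ℚ, SstarM (W (Encodable.encode r + 1)) = W (Encodable.encode r + 1) := by
    intro r
    unfold SstarM
    rw [hWinv]
    simp [Set.union_eq_self_of_subset_right, Set.singleton_subset_iff.mpr (hW1 _)]
  have heq : (List.ofFn fun i => SstarM (W (Encodable.encode (q i) + 1)))
      = (List.ofFn fun i => Encodable.encode (q i) + 1).map W := by
    rw [List.map_ofFn]
    congr 1
    funext i
    simp [Function.comp, hstar]
  rw [heq] at hxmem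
  have hinj : Function.Injective (fun i : Fin (n + 1) => Encodable.encode (q i) + 1) := by
    intro i j h
    simp only [add_left_inj] at h
    exact hq.injective (Encodable.encode_injective h)
  have hnodup : (List.ofFn fun i : Fin (n + 1) => Encodable.encode (q i) + 1).Nodup :=
    List.nodup_ofFn.mpr hinj
  have hge : ∀ m ∈ (List.ofFn fun i : Fin (n + 1) => Encodable.encode (q i) + 1), 0 + 1 ≤ m := by
    intro m hm
    rw [List.mem_ofFn] at hm
    obtain ⟨i, rfl⟩ := hm
    simpa using Nat.succ_le_succ (Nat.zero_le _)
  exact hW0 (key W hW1 hW3 _ _ le_rfl hnodup 0 hge hxmem)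
end

section
/- Let G be a group and F a downward directed family of nonempty subsets of G. Let F^G denote the set of all subsets of G of the form ⋃_{g∈G} g S_g g⁻¹, where (S_g)_{g∈G} ranges over all G-tuples of members of F. Then F^G is a downward directed family of nonempty subsets of G, F^G is invariant under conjugation by elements of G (i.e., for every U ∈ F^G and g ∈ G, gUg⁻¹ ∈ F^G), and for every group topology T on G, the family F^G converges to e under T if and only if F converges to e under T. -/
open Pointwise

/-- `F` is downward directed. -/
def DownDirectedM {G : Type*} [Group G] (F : Set (Set G)) : Prop :=
  ∀ S₁ ∈ F, ∀ S₂ ∈ F, ∃ S₃ ∈ F, S₃ ⊆ S₁ ∩ S₂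

/-- The conjugate `g S g⁻¹` of a subset `S`. -/
def conjSet {G : Type*} [Group G] (g : G) (S : Set G) : Set G :=
  (fun x => g * x * g⁻¹) '' S

/-- `F^G`: the set of all subsets of `G` of the form `⋃_{g ∈ G} g S_g g⁻¹`,
for `G`-tuples `(S_g)_{g ∈ G}` of members of `F`. -/
def FconjG {G : Type*} [Group G] (F : Set (Set G)) : Set (Set G) :=
  {U | ∃ S : G → Set G, (∀ g : G, S g ∈ F) ∧ U = ⋃ g : G, conjSet g (S g)}

lemma conjSet_conjSet {G : Type*} [Group G] (g h : G) (S : Set G) :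
    conjSet g (conjSet h S) = conjSet (g * h) S := by
  simp only [conjSet, ← Set.image_comp]
  apply Set.image_congr'
  intro x
  simp [mul_assoc]

lemma conjSet_one {G : Type*} [Group G] (S : Set G) : conjSet 1 S = S := by
  simp [conjSet]

theorem stmt12 {G : Type*} [Group G] (F : Set (Set G))
    (hdir : DownDirectedM F) (hne : ∀ S ∈ F, S.Nonempty) :
    DownDirectedM (FconjG F) ∧
    (∀ U ∈ FconjG F, U.Nonempty) ∧
    (∀ U ∈ FconjG F, ∀ g : G, conjSet g U ∈ FconjG F) ∧
    (∀ t : TopologicalSpace G, @IsTopologicalGroup G t _ →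
      ((∀ V ∈ @nhds G t 1, ∃ S ∈ FconjG F, S ⊆ V) ↔
        (∀ V ∈ @nhds G t 1, ∃ S ∈ F, S ⊆ V))) := by
  refine ⟨?_, ?_, ?_, ?_⟩
  · rintro U₁ ⟨S₁, hS₁, rfl⟩ U₂ ⟨S₂, hS₂, rfl⟩
    choose S₃ hS₃ hsub using fun g => hdir (S₁ g) (hS₁ g) (S₂ g) (hS₂ g)
    refine ⟨⋃ g, conjSet g (S₃ g), ⟨S₃, hS₃, rfl⟩, ?_⟩
    intro x hx
    simp only [Set.mem_iUnion, conjSet, Set.mem_image] at hx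
    obtain ⟨g, y, hy, rfl⟩ := hx
    constructor <;> simp only [Set.mem_iUnion, conjSet, Set.mem_image]
    · exact ⟨g, y, (hsub g hy).1, rfl⟩
    · exact ⟨g, y, (hsub g hy).2, rfl⟩
  · rintro U ⟨S, hS, rfl⟩
    obtain ⟨x, hx⟩ := hne (S 1) (hS 1)
    exact ⟨1 * x * 1⁻¹, Set.mem_iUnion.2 ⟨1, ⟨x, hx, rfl⟩⟩⟩
  · rintro U ⟨S, hS, rfl⟩ g
    refine ⟨fun k => S (g⁻¹ * k), fun k => hS _, ?_⟩
    have : conjSet g (⋃ h, conjSet h (S h)) = ⋃ h, conjSet (g * h) (S h) := by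
      simp only [conjSet, Set.image_iUnion, ← Set.image_comp]
      apply Set.iUnion_congr
      intro h
      apply Set.image_congr'
      intro x
      simp [mul_assoc]
    rw [this]
    ext x
    simp only [Set.mem_iUnion]
    constructor
    · rintro ⟨h, hx⟩
      exact ⟨g * h, by simpa using hx⟩
    · rintro ⟨k, hx⟩
      refine ⟨g⁻¹ * k, ?_⟩
      simpa using hx
  · intro t ht
    constructor
    · intro hconv V hV
      obtain ⟨U, ⟨S, hS, rfl⟩, hUV⟩ := hconv V hV
      refine ⟨S 1, hS 1, ?_⟩
      intro x hx
      apply hUV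
      exact Set.mem_iUnion.2 ⟨1, by simpa [conjSet_one] using hx⟩
    · intro hconv V hV
      have key : ∀ g : G, ∃ S ∈ F, conjSet g S ⊆ V := by
        intro g
        have hcont : Continuous (fun x : G => g * x * g⁻¹) := by
          exact (continuous_const.mul continuous_id).mul continuous_const
        have hpre : (fun x : G => g * x * g⁻¹) ⁻¹' V ∈ @nhds G t 1 := by
          apply hcont.continuousAt.preimage_mem_nhds
          simpa using hV
        obtain ⟨S, hSF, hSsub⟩ := hconv _ hpre
        refine ⟨S, hSF, ?_⟩
        rintro x ⟨y, hy, rfl⟩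
        exact hSsub hy
      choose S hSF hSsub using key
      refine ⟨⋃ g, conjSet g (S g), ⟨S, hSF, rfl⟩, ?_⟩
      intro x hx
      obtain ⟨g, hg⟩ := Set.mem_iUnion.1 hx
      exact hSsub g hg
end

section
/- Let G be a group and F a self-indulgent downward directed family of subsets of G which is closed under conjugation by members of G and satisfies: for every g ∈ G with g ≠ e and every n ≥ 1 there exists S ∈ F with g ∉ (S*)ⁿ. Let g ∈ G, and suppose that for some n ≥ 0 and 0 ≤ m ≤ n, S₀, …, S_{m−1}, S_{m+1}, …, S_n are members of F such that g ∉ S₀* ⋯ S_{m−1}* · S_{m+1}* ⋯ S_n*. Then there exists S_m ∈ F such that g ∉ S₀* ⋯ S_{m−1}* · S_m* · S_{m+1}* ⋯ S_n*. -/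
open Pointwise

/-- `F'` is a downward cofinal subset of `F` (ordered by inclusion). -/
def DownCofinalM {G : Type*} [Group G] (F' F : Set (Set G)) : Prop :=
  F' ⊆ F ∧ ∀ S ∈ F, ∃ T ∈ F', T ⊆ S

/-- The family `(x T)_{T ∈ F''}`, indexed by `F''` ordered (downward) by inclusion,
converges strongly to `a` with respect to `F`. -/
def ConvStrongM {G : Type*} [Group G] (F F'' : Set (Set G)) (x : Set G → G)
    (a : G) : Prop :=
  ∀ S ∈ F, ∃ T ∈ F'', ∀ T' ∈ F'', T' ⊆ T → x T' * a⁻¹ ∈ SstarM S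

/-- `F` is self-indulgent. -/
def SelfIndulgentM {G : Type*} [Group G] (F : Set (Set G)) : Prop :=
  ∀ S ∈ F, ∀ F' : Set (Set G), DownCofinalM F' F →
    ∀ x : Set G → G, (∀ T ∈ F', x T ∈ SstarM S) →
      ∃ a ∈ SstarM S, ∃ F'' : Set (Set G), DownCofinalM F'' F' ∧ ConvStrongM F F'' x a

section Aux
variable {G : Type*} [Group G]

lemma one_mem_SstarM (S : Set G) : (1 : G) ∈ SstarM S := Or.inl (Or.inr rfl)

lemma SstarM_mono {S T : Set G} (h : S ⊆ T) : SstarM S ⊆ SstarM T := by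
  intro x hx
  rcases hx with (hx | hx) | hx
  · exact Or.inl (Or.inl (h hx))
  · exact Or.inl (Or.inr hx)
  · exact Or.inr (Set.inv_subset_inv.2 h hx)

lemma SstarM_inv {S : Set G} {x : G} (h : x ∈ SstarM S) : x⁻¹ ∈ SstarM S := by
  rcases h with (hx | hx) | hx
  · exact Or.inr (by simpa [Set.mem_inv] using hx)
  · simp only [Set.mem_singleton_iff] at hx
    subst hx; simpa using one_mem_SstarM S
  · exact Or.inl (Or.inl (by rwa [Set.mem_inv] at hx))

lemma conj_mem_SstarM {U : Set G} {a e : G} (h : e ∈ SstarM (conjSet a U)) :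
    a⁻¹ * e * a ∈ SstarM U := by
  rcases h with (hx | hx) | hx
  · obtain ⟨u, hu, rfl⟩ := hx
    have : a⁻¹ * (a * u * a⁻¹) * a = u := by group
    rw [this]; exact Or.inl (Or.inl hu)
  · simp only [Set.mem_singleton_iff] at hx
    subst hx; simpa using one_mem_SstarM U
  · rw [Set.mem_inv] at hx
    obtain ⟨u, hu, hh⟩ := hx
    have hh' : a * u * a⁻¹ = e⁻¹ := hh
    have he : e = (a * u * a⁻¹)⁻¹ := by rw [hh', inv_inv]
    rw [he]
    have h2 : a⁻¹ * (a * u * a⁻¹)⁻¹ * a = u⁻¹ := by group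
    rw [h2]; exact SstarM_inv (Or.inl (Or.inl hu))

lemma DownCofinal_trans {F₁ F₂ F₃ : Set (Set G)} (h12 : DownCofinalM F₁ F₂)
    (h23 : DownCofinalM F₂ F₃) : DownCofinalM F₁ F₃ := by
  refine ⟨h12.1.trans h23.1, fun S hS => ?_⟩
  obtain ⟨T, hT, hTS⟩ := h23.2 S hS
  obtain ⟨T', hT', h'⟩ := h12.2 T hT
  exact ⟨T', hT', h'.trans hTS⟩

lemma ConvStrong_restrict {F F' F'' : Set (Set G)} {x : Set G → G} {a : G}
    (hsub : DownCofinalM F'' F') (h : ConvStrongM F F' x a) : ConvStrongM F F'' x a := by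
  intro V hV
  obtain ⟨T, hT, hTp⟩ := h V hV
  obtain ⟨T2, hT2, hT2T⟩ := hsub.2 T hT
  exact ⟨T2, hT2, fun T' hT' hs => hTp T' (hsub.1 hT') (hs.trans hT2T)⟩

lemma dir_glb {F : Set (Set G)} (hdir : DownDirectedM F) :
    ∀ (k : ℕ) (T : Fin k → Set G), (∀ i, T i ∈ F) → ∀ W ∈ F,
      ∃ V ∈ F, V ⊆ W ∧ ∀ i, V ⊆ T i := by
  intro k
  induction k with
  | zero => exact fun T _ W hW => ⟨W, hW, subset_rfl, fun i => i.elim0⟩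
  | succ k ih =>
    intro T hT W hW
    obtain ⟨V, hVF, hVW, hVT⟩ := ih (fun i => T i.succ) (fun i => hT _) W hW
    obtain ⟨V', hV'F, hV'⟩ := hdir V hVF (T 0) (hT 0)
    refine ⟨V', hV'F, (hV'.trans Set.inter_subset_left).trans hVW, fun i => ?_⟩
    refine Fin.cases ?_ ?_ i
    · exact hV'.trans Set.inter_subset_right
    · exact fun j => (hV'.trans Set.inter_subset_left).trans (hVT j)

lemma multiSI {F : Set (Set G)} (hsi : SelfIndulgentM F) :
    ∀ (k : ℕ) (U : Fin k → Set G), (∀ i, U i ∈ F) →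
    ∀ (F' : Set (Set G)), DownCofinalM F' F →
    ∀ (y : Set G → Fin k → G), (∀ T ∈ F', ∀ i, y T i ∈ SstarM (U i)) →
    ∃ c : Fin k → G, (∀ i, c i ∈ SstarM (U i)) ∧
    ∃ F'' : Set (Set G), DownCofinalM F'' F' ∧
      ∀ i, ConvStrongM F F'' (fun T => y T i) (c i) := by
  intro k
  induction k with
  | zero =>
    intro U _ F' hF' y _
    exact ⟨Fin.elim0, fun i => i.elim0, F', ⟨subset_rfl, fun S hS => ⟨S, hS, subset_rfl⟩⟩,
      fun i => i.elim0⟩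
  | succ k ih =>
    intro U hU F' hF' y hy
    obtain ⟨a, ha, F₁, hF₁, hconv₀⟩ :=
      hsi (U 0) (hU 0) F' hF' (fun T => y T 0) (fun T hT => hy T hT 0)
    obtain ⟨c, hc, F'', hF'', hconv⟩ :=
      ih (fun i => U i.succ) (fun i => hU _) F₁ (DownCofinal_trans hF₁ hF')
        (fun T i => y T i.succ) (fun T hT i => hy T (hF₁.1 hT) i.succ)
    refine ⟨Fin.cons a c, fun i => ?_, F'', DownCofinal_trans hF'' hF₁, fun i => ?_⟩
    · refine Fin.cases ?_ ?_ i
      · simpa using ha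
      · intro j; simpa using hc j
    · refine Fin.cases ?_ ?_ i
      · simpa using ConvStrong_restrict hF'' hconv₀
      · intro j; simpa using hconv j

lemma one_mem_listProd {l : List (Set G)} (h : ∀ s ∈ l, (1 : G) ∈ s) :
    (1 : G) ∈ l.prod := by
  induction l with
  | nil => simp [Set.mem_one]
  | cons a t ih =>
    rw [List.prod_cons]
    simpa using Set.mul_mem_mul (h a (by simp)) (ih fun s hs => h s (by simp [hs]))

lemma prod_mem_pow {W : Set G} :
    ∀ (k : ℕ) (x : Fin k → G), (∀ i, x i ∈ W) → (List.ofFn x).prod ∈ W ^ k := by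
  intro k
  induction k with
  | zero => intro x _; simp [Set.mem_one]
  | succ k ih =>
    intro x hx
    rw [List.ofFn_succ, List.prod_cons, pow_succ']
    exact Set.mul_mem_mul (hx 0) (ih _ fun i => hx i.succ)

lemma conj_prod_ofFn (a : G) :
    ∀ (k : ℕ) (f : Fin k → G),
      (List.ofFn fun i => a * f i * a⁻¹).prod = a * (List.ofFn f).prod * a⁻¹ := by
  intro k
  induction k with
  | zero => intro f; simp
  | succ k ih =>
    intro f
    rw [List.ofFn_succ, List.ofFn_succ, List.prod_cons, List.prod_cons, ih fun i => f i.succ]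
    group

lemma main_identity :
    ∀ (k : ℕ) (c : Fin k → G), ∃ q : Fin k → G,
      ∀ e : Fin k → G, (List.ofFn fun i => e i * c i).prod =
        (List.ofFn fun i => q i * e i * (q i)⁻¹).prod * (List.ofFn c).prod := by
  intro k
  induction k with
  | zero => exact fun c => ⟨Fin.elim0, fun e => by simp⟩
  | succ k ih =>
    intro c
    obtain ⟨q', hq'⟩ := ih fun i => c i.succ
    refine ⟨Fin.cons 1 (fun i => c 0 * q' i), fun e => ?_⟩
    simp only [List.ofFn_succ, List.prod_cons, Fin.cons_zero, Fin.cons_succ]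
    rw [hq' fun i => e i.succ]
    have hrw : (List.ofFn fun i : Fin k => c 0 * q' i * e i.succ * (c 0 * q' i)⁻¹) =
        List.ofFn fun i : Fin k => c 0 * (q' i * e i.succ * (q' i)⁻¹) * (c 0)⁻¹ := by
      congr 1; funext i; group
    rw [hrw, conj_prod_ofFn (c 0) k fun i => q' i * e i.succ * (q' i)⁻¹]
    group

lemma eraseIdx_ofFn {α : Type*} (k : ℕ) (f : Fin (k + 1) → α) (m : Fin (k + 1)) :
    (List.ofFn f).eraseIdx (m : ℕ) = List.ofFn (fun i : Fin k => f (m.succAbove i)) := by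
  apply List.ext_getElem
  · simp [List.length_eraseIdx, m.isLt]
  · intro i h1 h2
    simp only [List.length_ofFn] at h2
    rw [List.getElem_ofFn, List.getElem_eraseIdx]
    split
    · rename_i hlt
      rw [List.getElem_ofFn]
      congr 1
      symm
      exact Fin.succAbove_of_castSucc_lt m ⟨i, h2⟩ (by simpa [Fin.lt_def] using hlt)
    · rename_i hge
      rw [List.getElem_ofFn]
      congr 1
      symm
      exact Fin.succAbove_of_le_castSucc m ⟨i, h2⟩ (by simp [Fin.le_def]; omega)

lemma prod_eraseIdx_of_one {l : List G} {i : ℕ} (h : i < l.length) (h1 : l[i] = 1) :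
    (l.eraseIdx i).prod = l.prod := by
  rw [List.eraseIdx_eq_take_drop_succ, List.prod_append,
    ← List.prod_take_mul_prod_drop l i, List.drop_eq_getElem_cons h, List.prod_cons, h1, one_mul]

end Aux

theorem stmt16 {G : Type*} [Group G] (F : Set (Set G))
    (hdir : DownDirectedM F) (hsi : SelfIndulgentM F)
    (hconj : ∀ S ∈ F, ∀ g : G, conjSet g S ∈ F)
    (hcond : ∀ g : G, g ≠ 1 → ∀ n : ℕ, 1 ≤ n → ∃ S ∈ F, g ∉ (SstarM S) ^ n)
    (g : G) (n : ℕ) (m : Fin (n + 1)) (S : Fin (n + 1) → Set G)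
    (hS : ∀ i : Fin (n + 1), i ≠ m → S i ∈ F)
    (hgnot : g ∉ ((List.ofFn fun i => SstarM (S i)).eraseIdx (m : ℕ)).prod) :
    ∃ Sm ∈ F,
      g ∉ (List.ofFn fun i => SstarM (Function.update S m Sm i)).prod := by
  classical
  have hg1 : g ≠ 1 := by
    rintro rfl
    apply hgnot
    apply one_mem_listProd
    intro s hs
    have hs' := List.mem_of_mem_eraseIdx hs
    rw [List.mem_ofFn] at hs'
    obtain ⟨i, rfl⟩ := hs'
    exact one_mem_SstarM _
  obtain ⟨S₀, hS₀F, -⟩ := hcond g hg1 1 le_rfl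
  by_contra hcon
  push_neg at hcon
  set F₀ : Set (Set G) := {T | T ∈ F ∧ T ⊆ S₀} with hF₀def
  have hF₀cof : DownCofinalM F₀ F := by
    constructor
    · intro T hT; exact hT.1
    · intro W hW
      obtain ⟨T, hT, hsub⟩ := hdir W hW S₀ hS₀F
      exact ⟨T, ⟨hT, hsub.trans Set.inter_subset_right⟩, hsub.trans Set.inter_subset_left⟩
  have hdecomp : ∀ T : Set G, ∃ y : Fin (n + 1) → G, T ∈ F₀ →
      (∀ i, i ≠ m → y i ∈ SstarM (S i)) ∧ y m ∈ SstarM T ∧ (List.ofFn y).prod = g := by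
    intro T
    by_cases hT : T ∈ F₀
    · have hmem := hcon T hT.1
      rw [Set.mem_prod_list_ofFn] at hmem
      obtain ⟨f, hf⟩ := hmem
      refine ⟨fun i => (f i : G), fun _ => ⟨?_, ?_, hf⟩⟩
      · intro i him
        show (f i : G) ∈ SstarM (S i)
        rw [← Function.update_of_ne him T S]
        exact (f i).2
      · have h2 : ∀ v : G, v ∈ SstarM (Function.update S m T m) → v ∈ SstarM T := by
          rw [Function.update_self]; exact fun v h => h
        exact h2 _ (f m).2
    · exact ⟨fun _ => 1, fun h => absurd h hT⟩
  choose y hy using hdecomp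
  set U : Fin (n + 1) → Set G := fun i => if i = m then S₀ else S i with hUdef
  have hUF : ∀ i, U i ∈ F := by
    intro i
    by_cases h : i = m
    · simp only [hUdef, if_pos h]; exact hS₀F
    · simp only [hUdef, if_neg h]; exact hS i h
  have hyU : ∀ T ∈ F₀, ∀ i, y T i ∈ SstarM (U i) := by
    intro T hT i
    by_cases h : i = m
    · subst h
      simp only [hUdef, if_pos rfl]
      exact SstarM_mono hT.2 ((hy T hT).2.1)
    · simp only [hUdef, if_neg h]
      exact (hy T hT).1 i h
  obtain ⟨c, hcU, F'', hF''cof, hconv⟩ := multiSI hsi (n + 1) U hUF F₀ hF₀cof y hyU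
  have hF''F : DownCofinalM F'' F := DownCofinal_trans hF''cof hF₀cof
  have glb : ∀ (k : ℕ) (T : Fin k → Set G), (∀ i, T i ∈ F) →
      ∃ T' ∈ F'', ∀ i, T' ⊆ T i := by
    intro k T hT
    obtain ⟨V, hVF, -, hVT⟩ := dir_glb hdir k T hT S₀ hS₀F
    obtain ⟨T', hT', hT'V⟩ := hF''F.2 V hVF
    exact ⟨T', hT', fun i => hT'V.trans (hVT i)⟩
  -- Step A : g = (List.ofFn c).prod
  have hgp : g = (List.ofFn c).prod := by
    by_contra hne
    have hne' : g * ((List.ofFn c).prod)⁻¹ ≠ 1 := by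
      intro h; exact hne (by rwa [mul_inv_eq_one] at h)
    obtain ⟨U₁, hU₁F, hU₁⟩ := hcond _ hne' (n + 1) (by omega)
    obtain ⟨q, hq⟩ := main_identity (n + 1) c
    have hVF : ∀ i : Fin (n + 1), conjSet (q i)⁻¹ U₁ ∈ F := fun i => hconj U₁ hU₁F _
    have hthr : ∀ i, ∃ Ti ∈ F'', ∀ T' ∈ F'', T' ⊆ Ti →
        y T' i * (c i)⁻¹ ∈ SstarM (conjSet (q i)⁻¹ U₁) :=
      fun i => hconv i _ (hVF i)
    choose Ti hTiF'' hTi using hthr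
    obtain ⟨T', hT'F'', hT'sub⟩ := glb (n + 1) Ti (fun i => hF''F.1 (hTiF'' i))
    have hT'F₀ : T' ∈ F₀ := hF''cof.1 hT'F''
    have he : ∀ i, y T' i * (c i)⁻¹ ∈ SstarM (conjSet (q i)⁻¹ U₁) :=
      fun i => hTi i T' hT'F'' (hT'sub i)
    have hyprod : (List.ofFn fun i => (y T' i * (c i)⁻¹) * c i).prod = g := by
      have hfe : (fun i => (y T' i * (c i)⁻¹) * c i) = y T' := by
        funext i; group
      rw [hfe]; exact (hy T' hT'F₀).2.2
    have hkey := hq (fun i => y T' i * (c i)⁻¹)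
    rw [hyprod] at hkey
    have hmem : g * ((List.ofFn c).prod)⁻¹ ∈ (SstarM U₁) ^ (n + 1) := by
      have hgp2 : g * ((List.ofFn c).prod)⁻¹ =
          (List.ofFn fun i => q i * (y T' i * (c i)⁻¹) * (q i)⁻¹).prod := by
        rw [hkey]; group
      rw [hgp2]
      apply prod_mem_pow
      intro i
      have hcm := conj_mem_SstarM (a := (q i)⁻¹) (he i)
      simpa using hcm
    exact hU₁ hmem
  -- Step B : c m = 1
  have hcm : c m = 1 := by
    by_contra hne
    have hne' : (c m)⁻¹ ≠ 1 := by simpa using hne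
    obtain ⟨U₂, hU₂F, hU₂⟩ := hcond (c m)⁻¹ hne' 2 (by omega)
    obtain ⟨Tm, hTmF'', hTm⟩ := hconv m U₂ hU₂F
    obtain ⟨T', hT'F'', hT'sub⟩ := glb 2 (fun j => if j = 0 then Tm else U₂)
      (by intro j; by_cases h : j = 0 <;> simp [h, hF''F.1 hTmF'', hU₂F])
    have h1 : T' ⊆ Tm := by simpa using hT'sub 0
    have h2 : T' ⊆ U₂ := by simpa using hT'sub 1
    have hT'F₀ : T' ∈ F₀ := hF''cof.1 hT'F''
    have hyTm : y T' m ∈ SstarM U₂ := SstarM_mono h2 ((hy T' hT'F₀).2.1)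
    have he : y T' m * (c m)⁻¹ ∈ SstarM U₂ := hTm T' hT'F'' h1
    have hmem : (c m)⁻¹ ∈ (SstarM U₂) ^ 2 := by
      have heq : (c m)⁻¹ = (y T' m)⁻¹ * (y T' m * (c m)⁻¹) := by group
      rw [heq, sq]
      exact Set.mul_mem_mul (SstarM_inv hyTm) he
    exact hU₂ hmem
  -- Step C : contradiction with hgnot
  apply hgnot
  have hprodc : (List.ofFn fun i : Fin n => c (m.succAbove i)).prod = g := by
    rw [hgp, ← eraseIdx_ofFn n c m]
    exact prod_eraseIdx_of_one (by simp [m.isLt]) (by rw [List.getElem_ofFn]; simp [hcm])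
  rw [eraseIdx_ofFn n (fun i => SstarM (S i)) m, Set.mem_prod_list_ofFn]
  refine ⟨fun i => ⟨c (m.succAbove i), ?_⟩, hprodc⟩
  have hne := Fin.succAbove_ne m i
  have hmemU := hcU (m.succAbove i)
  simp only [hUdef, if_neg hne] at hmemU
  exact hmemU
end

section
/- Let G be the free group on two generators x and y, and define a sequence (f_n)_{n∈ℕ} in G by f₀ = x, f₁ = y, and f_{n+1} = f_{n−1} f_n for n ≥ 1. Then there do not exist a Hausdorff group topology on G and an element c ∈ G such that the sequence (f_n) converges to c in that topology. -/
theorem stmt18 (f : ℕ → FreeGroup Bool)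
    (hf0 : f 0 = FreeGroup.of true) (hf1 : f 1 = FreeGroup.of false)
    (hrec : ∀ n : ℕ, f (n + 2) = f n * f (n + 1)) :
    ¬ ∃ (t : TopologicalSpace (FreeGroup Bool)) (_ : @IsTopologicalGroup (FreeGroup Bool) t _)
        (_ : @T2Space (FreeGroup Bool) t) (c : FreeGroup Bool),
        Filter.Tendsto f Filter.atTop (@nhds (FreeGroup Bool) t c) := by
  rintro ⟨t, htg, ht2, c, hc⟩
  letI : TopologicalSpace (FreeGroup Bool) := t
  haveI := htg
  haveI := ht2
  -- the commutator along even indices is constant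
  have key : ∀ n, f (2*n) * f (2*n+1) * (f (2*n))⁻¹ * (f (2*n+1))⁻¹ =
      FreeGroup.of true * FreeGroup.of false *
        (FreeGroup.of true)⁻¹ * (FreeGroup.of false)⁻¹ := by
    intro n
    induction n with
    | zero => simp [hf0, hf1]
    | succ k ih =>
      have h1 := hrec (2*k)
      have h2 := hrec (2*k+1)
      rw [show 2*(k+1) = 2*k+2 from by ring, show 2*k+2+1 = 2*k+1+2 from by ring,
        h2, h1, ← ih]
      group
  have h2n : Filter.Tendsto (fun n : ℕ => 2*n) Filter.atTop Filter.atTop :=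
    Filter.tendsto_atTop_atTop.mpr fun b => ⟨b, fun a ha => by omega⟩
  have h2n1 : Filter.Tendsto (fun n : ℕ => 2*n+1) Filter.atTop Filter.atTop :=
    Filter.tendsto_atTop_atTop.mpr fun b => ⟨b, fun a ha => by omega⟩
  have hc1 : Filter.Tendsto (fun n => f (2*n)) Filter.atTop (nhds c) := hc.comp h2n
  have hc2 : Filter.Tendsto (fun n => f (2*n+1)) Filter.atTop (nhds c) := hc.comp h2n1
  have hg : Filter.Tendsto
      (fun n => f (2*n) * f (2*n+1) * (f (2*n))⁻¹ * (f (2*n+1))⁻¹)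
      Filter.atTop (nhds (c * c * c⁻¹ * c⁻¹)) :=
    ((hc1.mul hc2).mul hc1.inv).mul hc2.inv
  have hconst : Filter.Tendsto
      (fun _ : ℕ => FreeGroup.of true * FreeGroup.of false *
        (FreeGroup.of true)⁻¹ * (FreeGroup.of false)⁻¹)
      Filter.atTop (nhds (c * c * c⁻¹ * c⁻¹)) := hg.congr key
  have heq : FreeGroup.of true * FreeGroup.of false *
      (FreeGroup.of true)⁻¹ * (FreeGroup.of false)⁻¹ = c * c * c⁻¹ * c⁻¹ :=
    tendsto_nhds_unique tendsto_const_nhds hconst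
  have h1 : FreeGroup.of true * FreeGroup.of false *
      (FreeGroup.of true)⁻¹ * (FreeGroup.of false)⁻¹ = (1 : FreeGroup Bool) := by
    rw [heq]; group
  -- contradiction: map to permutations
  have := congrArg (FreeGroup.lift fun b : Bool =>
    if b then (Equiv.swap 0 1 : Equiv.Perm (Fin 3)) else Equiv.swap 1 2) h1
  simp only [map_mul, map_inv, map_one, FreeGroup.lift_apply_of] at this
  revert this
  decide
end
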